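/- For a deterministic two-way automaton, if two words u and u' satisfy ∼_A (all four behaviors equal), then for every context (v,w), the context paths coincide: path_{vw}(v u w) = path_{vw}(v u' w). -/

import Mathlib

/-- A two-way automaton: deterministic transition function giving next state
and a head move in `{-1, 0, +1}`. -/
structure TwoWay (Q A : Type) where
  δ : Q → A → Q × ℤ
  move : ∀ q a, (δ q a).2 = -1 ∨ (δ q a).2 = 0 ∨ (δ q a).2 = 1

/-- One step of the two-way automaton on word `w`; configurations are
(state, position), positions `1..|w|` carry letters, `0` is the left exit,
`|w|+1` the right exit. -/
def TwoWay.step {Q A : Type} (M : TwoWay Q A) (w : List A) (c c' : Q × ℤ) : Prop :=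
  1 ≤ c.2 ∧ ∃ a, w[(c.2 - 1).toNat]? = some a ∧
    c'.1 = (M.δ c.1 a).1 ∧ c'.2 = c.2 + (M.δ c.1 a).2

def TwoWay.reach {Q A : Type} (M : TwoWay Q A) (w : List A) : Q × ℤ → Q × ℤ → Prop :=
  Relation.ReflTransGen (M.step w)

/-- Left-to-left behavior: runs starting at the first position and leaving on the left. -/
def TwoWay.bhLL {Q A : Type} (M : TwoWay Q A) (w : List A) : Set (Q × Q) :=
  {pq | M.reach w (pq.1, 1) (pq.2, 0)}

/-- Left-to-right behavior. -/
def TwoWay.bhLR {Q A : Type} (M : TwoWay Q A) (w : List A) : Set (Q × Q) :=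
  {pq | M.reach w (pq.1, 1) (pq.2, (w.length : ℤ) + 1)}

/-- Right-to-left behavior. -/
def TwoWay.bhRL {Q A : Type} (M : TwoWay Q A) (w : List A) : Set (Q × Q) :=
  {pq | M.reach w (pq.1, (w.length : ℤ)) (pq.2, 0)}

/-- Right-to-right behavior. -/
def TwoWay.bhRR {Q A : Type} (M : TwoWay Q A) (w : List A) : Set (Q × Q) :=
  {pq | M.reach w (pq.1, (w.length : ℤ)) (pq.2, (w.length : ℤ) + 1)}

/-- `u ∼_A v`: all four behaviors coincide. -/
def TwoWay.equiv {Q A : Type} (M : TwoWay Q A) (u v : List A) : Prop :=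
  M.bhLL u = M.bhLL v ∧ M.bhLR u = M.bhLR v ∧ M.bhRL u = M.bhRL v ∧ M.bhRR u = M.bhRR v

/-- A two-way automaton with initial state and final states. -/
structure TwoWayAcc (Q A : Type) extends TwoWay Q A where
  q0 : Q
  F : Set Q

/-- `p` is the (state, position) sequence of the accepting run of `M` over `w`:
it starts at the first position in the initial state, follows the transition
steps, and ends on the right end in a final state. -/
def TwoWayAcc.IsAccPath {Q A : Type} (M : TwoWayAcc Q A) (w : List A)
    (p : List (Q × ℤ)) : Prop :=
  p.head? = some (M.q0, 1) ∧ List.Chain' (M.toTwoWay.step w) p ∧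
    ∃ qf, p.getLast? = some (qf, (w.length : ℤ) + 1) ∧ qf ∈ M.F

/-- Projection of a path onto an ordered sequence `I` of positions: keep only
configurations whose position lies in `I` and rename positions by their index
in `I`. -/
def projPath {Q : Type} (I : List ℤ) (p : List (Q × ℤ)) : List (Q × ℕ) :=
  (p.filter fun c => decide (c.2 ∈ I)).map fun c => (c.1, I.idxOf c.2)

/-- The positions of the context `(v, w)` inside `v x w`, for a middle word `x`:
positions `1..|v|` and `|v|+|x|+1..|v|+|x|+|w|`. -/
def ctxI {A : Type} (v x w : List A) : List ℤ :=
  ((List.range v.length).map fun i => (i : ℤ) + 1) ++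
    ((List.range w.length).map fun i => (v.length : ℤ) + x.length + i + 1)


namespace Helpers

variable {Q A : Type}

lemma step_bounds {M : TwoWay Q A} {x : List A} {c c' : Q × ℤ} (h : M.step x c c') :
    1 ≤ c.2 ∧ c.2 ≤ x.length ∧ (c'.2 = c.2 - 1 ∨ c'.2 = c.2 ∨ c'.2 = c.2 + 1) := by
  obtain ⟨h1, aa, ha, hq, hp⟩ := h
  have hlt : (c.2 - 1).toNat < x.length := (List.getElem?_eq_some_iff.mp ha).1
  rcases M.move c.1 aa with hm | hm | hm <;>
    exact ⟨h1, by omega, by omega⟩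

lemma chain'_mem_dropLast {α : Type*} {R : α → α → Prop} :
    ∀ {l : List α}, List.Chain' R l → ∀ {c}, c ∈ l.dropLast → ∃ c', R c c'
  | [], _, _, hc => by simp at hc
  | [x], _, _, hc => by simp at hc
  | x :: y :: t, h, c, hc => by
    rw [List.dropLast_cons₂, List.mem_cons] at hc
    rcases hc with rfl | hc
    · exact ⟨y, (List.isChain_cons_cons.mp h).1⟩
    · exact chain'_mem_dropLast (List.isChain_cons_cons.mp h).2 hc

lemma mem_last_or_step {M : TwoWay Q A} {x : List A} :
    ∀ {p : List (Q × ℤ)} {d : Q × ℤ}, List.Chain' (M.step x) p → p.getLast? = some d →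
      ∀ c ∈ p, c = d ∨ ∃ c', M.step x c c'
  | [], _, _, _, c, hc => by simp at hc
  | [e], d, hch, hl, c, hc => by
    simp at hc hl; left; rw [hc, hl]
  | e :: e' :: t, d, hch, hl, c, hc => by
    rw [List.getLast?_cons_cons] at hl
    rcases List.mem_cons.mp hc with rfl | hc
    · exact Or.inr ⟨e', (List.isChain_cons_cons.mp hch).1⟩
    · exact mem_last_or_step (List.isChain_cons_cons.mp hch).2 hl c hc

lemma mem_pos_bounds {M : TwoWay Q A} {x : List A} {p : List (Q × ℤ)} {qf : Q}
    (hch : List.Chain' (M.step x) p) (hl : p.getLast? = some (qf, (x.length : ℤ) + 1)) :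
    ∀ c ∈ p, 1 ≤ c.2 ∧ c.2 ≤ (x.length : ℤ) + 1 := by
  intro c hc
  rcases mem_last_or_step hch hl c hc with rfl | ⟨c', hs⟩
  · constructor <;> simp
  · have := step_bounds hs; omega

/-- Extract a chain list from reach. -/
lemma reach_chain {M : TwoWay Q A} {x : List A} {c c' : Q × ℤ} (h : M.reach x c c') :
    ∃ l : List (Q × ℤ), List.Chain' (M.step x) l ∧ l.head? = some c ∧ l.getLast? = some c' := by
  induction h using Relation.ReflTransGen.head_induction_on with
  | refl => exact ⟨[c'], List.isChain_singleton _, rfl, rfl⟩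
  | head hs _ ih =>
    rename_i e f _
    obtain ⟨l, hch, hh, hl⟩ := ih
    obtain ⟨y, t, rfl⟩ : ∃ y t, l = y :: t := by
      cases l with
      | nil => simp at hh
      | cons y t => exact ⟨y, t, rfl⟩
    have hy : y = f := by simpa using hh
    refine ⟨e :: y :: t, List.isChain_cons_cons.mpr ⟨hy ▸ hs, hch⟩, rfl, ?_⟩
    rw [List.getLast?_cons_cons]; exact hl

/-- Glue two chains overlapping in one element. -/
lemma glue {α : Type*} {R : α → α → Prop} {l₁ l₂ : List α} {d : α}
    (h₁ : List.Chain' R l₁) (h₂ : List.Chain' R l₂)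
    (hd : l₁.getLast? = some d) (hh : l₂.head? = some d) :
    List.Chain' R (l₁ ++ l₂.tail) ∧ (l₁ ++ l₂.tail).head? = l₁.head? ∧
      (l₁ ++ l₂.tail).getLast? = l₂.getLast? := by
  obtain ⟨y, t, rfl⟩ : ∃ y t, l₂ = y :: t := by
    cases l₂ with
    | nil => simp at hh
    | cons y t => exact ⟨y, t, rfl⟩
  have hy : y = d := by simpa using hh
  have hne : l₁ ≠ [] := by rintro rfl; simp at hd
  refine ⟨?_, ?_, ?_⟩
  · refine List.IsChain.append h₁ h₂.tail ?_
    intro a ha b hb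
    rw [hd] at ha
    have had : d = a := by simpa using ha
    subst had
    have := List.isChain_cons.mp h₂
    exact hy ▸ this.1 b (by simpa using hb)
  · cases l₁ with
    | nil => simp at hd
    | cons z s => simp
  · show (l₁ ++ t).getLast? = _
    cases t with
    | nil => simpa using hd ▸ (by rw [hy])
    | cons z s =>
      rw [List.getLast?_append_of_ne_nil _ (by simp), List.getLast?_cons_cons]


variable {Q A : Type}

lemma get_left (v x w : List A) (pos : ℤ) (h1 : 1 ≤ pos) (h2 : pos ≤ v.length) :
    (v ++ x ++ w)[(pos - 1).toNat]? = v[(pos - 1).toNat]? := by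
  rw [List.append_assoc, List.getElem?_append_left (by omega)]

lemma get_mid (v x w : List A) (pos : ℤ) (h1 : 1 ≤ pos) (h2 : pos ≤ x.length) :
    (v ++ x ++ w)[(pos + v.length - 1).toNat]? = x[(pos - 1).toNat]? := by
  have e1 : (pos + v.length - 1).toNat = v.length + (pos - 1).toNat := by omega
  rw [List.append_assoc, e1, List.getElem?_append_right (by omega)]
  have e2 : v.length + (pos - 1).toNat - v.length = (pos - 1).toNat := by omega
  rw [e2, List.getElem?_append_left (by omega)]

lemma get_right (v x w : List A) (pos : ℤ)
    (h1 : (v.length : ℤ) + x.length + 1 ≤ pos)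
    (h2 : pos ≤ (v.length : ℤ) + x.length + w.length) :
    (v ++ x ++ w)[(pos - 1).toNat]? = w[(pos - 1 - v.length - x.length).toNat]? := by
  have e1 : (pos - 1).toNat = (v ++ x).length + (pos - 1 - v.length - x.length).toNat := by
    simp only [List.length_append]; omega
  rw [e1, List.getElem?_append_right (by omega)]
  congr 1
  omega

lemma bind_pure_map (l : List ℕ) :
    (l.flatMap fun a => pure ((a : ℕ) : ℤ)) = l.map (fun a : ℕ => (a : ℤ)) := by
  exact List.flatMap_pure_eq_map _ l

lemma ctxI_eq (v x w : List A) :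
    ctxI v x w = ((List.range v.length).map fun i : ℕ => (i : ℤ) + 1) ++
      ((List.range w.length).map fun i : ℕ => (i : ℤ) + ((v.length : ℤ) + x.length + 1)) := by
  show (List.map _ ((List.range v.length).flatMap fun a => pure ((a : ℕ) : ℤ))) ++
      (List.map _ ((List.range w.length).flatMap fun a => pure ((a : ℕ) : ℤ))) = _
  rw [bind_pure_map, bind_pure_map, List.map_map, List.map_map]
  congr 1 <;> · apply List.map_congr_left; intro i _; simp [Function.comp]; push_cast; ring

lemma mem_range_block (k : ℕ) (c pos : ℤ) :
    pos ∈ (List.range k).map (fun i : ℕ => (i : ℤ) + c) ↔ c + 1 ≤ pos + 1 ∧ pos < c + k := by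
  simp only [List.mem_map, List.mem_range]
  constructor
  · rintro ⟨i, hi, rfl⟩; omega
  · intro hp; exact ⟨(pos - c).toNat, by omega, by omega⟩

lemma indexOf_range_block (k : ℕ) (c : ℤ) (j : ℕ) (hj : j < k) :
    ((List.range k).map (fun i : ℕ => (i : ℤ) + c)).idxOf ((j : ℤ) + c) = j := by
  induction k generalizing c j with
  | zero => omega
  | succ n ih =>
    rw [List.range_succ_eq_map, List.map_cons, List.map_map]
    have hfc : ((fun i : ℕ => (i : ℤ) + c) ∘ Nat.succ) = (fun i : ℕ => (i : ℤ) + (c + 1)) := by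
      funext i; simp [Function.comp]; push_cast; ring
    rw [hfc]
    cases j with
    | zero =>
      apply List.idxOf_cons_eq
      norm_num
    | succ j' =>
      rw [List.idxOf_cons_ne _ (by push_cast; omega)]
      have e : ((j' + 1 : ℕ) : ℤ) + c = (j' : ℤ) + (c + 1) := by push_cast; ring
      rw [e, ih (c + 1) j' (by omega)]

lemma mem_ctxI (v x w : List A) (pos : ℤ) :
    pos ∈ ctxI v x w ↔ (1 ≤ pos ∧ pos ≤ v.length) ∨
      ((v.length : ℤ) + x.length + 1 ≤ pos ∧ pos ≤ (v.length : ℤ) + x.length + w.length) := by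
  rw [ctxI_eq, List.mem_append, mem_range_block, mem_range_block]
  omega

lemma indexOf_ctxI_left (v x w : List A) (pos : ℤ) (h1 : 1 ≤ pos) (h2 : pos ≤ v.length) :
    (ctxI v x w).idxOf pos = (pos - 1).toNat := by
  have hm : pos ∈ (List.range v.length).map (fun i : ℕ => (i : ℤ) + 1) := by
    rw [mem_range_block]; omega
  rw [ctxI_eq, List.idxOf_append_of_mem hm]
  have e : pos = (((pos - 1).toNat : ℕ) : ℤ) + 1 := by omega
  rw [e, indexOf_range_block _ _ _ (by omega)]
  omega

lemma indexOf_ctxI_right (v x w : List A) (pos : ℤ)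
    (h1 : (v.length : ℤ) + x.length + 1 ≤ pos)
    (h2 : pos ≤ (v.length : ℤ) + x.length + w.length) :
    (ctxI v x w).idxOf pos = v.length + (pos - v.length - x.length - 1).toNat := by
  have hnm : pos ∉ (List.range v.length).map (fun i : ℕ => (i : ℤ) + 1) := by
    rw [mem_range_block]; omega
  rw [ctxI_eq, List.idxOf_append_of_notMem hnm]
  have e : pos = (((pos - v.length - x.length - 1).toNat : ℕ) : ℤ)
      + ((v.length : ℤ) + x.length + 1) := by omega
  rw [e, indexOf_range_block _ _ _ (by omega)]
  simp
  omega

lemma projPath_append (I : List ℤ) (l₁ l₂ : List (Q × ℤ)) :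
    projPath I (l₁ ++ l₂) = projPath I l₁ ++ projPath I l₂ := by
  simp [projPath, List.filter_append]

lemma projPath_nil_of (I : List ℤ) (l : List (Q × ℤ)) (h : ∀ c ∈ l, c.2 ∉ I) :
    projPath I l = [] := by
  have : l.filter (fun c => decide (c.2 ∈ I)) = [] := by
    rw [List.filter_eq_nil_iff]
    intro c hc; simpa using h c hc
  simp [projPath, this]

lemma projPath_singleton_mem (I : List ℤ) (q : Q) (s : ℤ) (h : s ∈ I) :
    projPath I [(q, s)] = [(q, I.idxOf s)] := by
  simp [projPath, h]

lemma projPath_cons (I : List ℤ) (c : Q × ℤ) (l : List (Q × ℤ)) :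
    projPath I (c :: l) = projPath I [c] ++ projPath I l := by
  rw [← projPath_append]; rfl

end Helpers
section H3
namespace Helpers
variable {Q A : Type}

lemma step_mid_up {M : TwoWay Q A} (v x w : List A) {c c' : Q × ℤ} (h : M.step x c c') :
    M.step (v ++ x ++ w) (c.1, c.2 + v.length) (c'.1, c'.2 + v.length) := by
  obtain ⟨h1, aa, ha, hq, hp⟩ := h
  have hb : (c.2 - 1).toNat < x.length := (List.getElem?_eq_some_iff.mp ha).1
  refine ⟨by simp; omega, aa, ?_, hq, by simp; omega⟩
  show (v ++ x ++ w)[((c.2 + v.length) - 1).toNat]? = some aa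
  rw [get_mid v x w c.2 h1 (by omega)]
  exact ha

lemma step_mid_down {M : TwoWay Q A} (v x w : List A) {c c' : Q × ℤ}
    (h : M.step (v ++ x ++ w) c c') (h1 : (v.length : ℤ) + 1 ≤ c.2)
    (h2 : c.2 ≤ (v.length : ℤ) + x.length) :
    M.step x (c.1, c.2 - v.length) (c'.1, c'.2 - v.length) := by
  obtain ⟨_, aa, ha, hq, hp⟩ := h
  refine ⟨by simp; omega, aa, ?_, hq, by simp; omega⟩
  show x[((c.2 - v.length) - 1).toNat]? = some aa
  rw [← get_mid v x w (c.2 - v.length) (by omega) (by omega)]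
  have e : c.2 - v.length + v.length - 1 = c.2 - 1 := by ring
  rw [e]
  exact ha

lemma chain_mid_up {M : TwoWay Q A} (v x w : List A) {l : List (Q × ℤ)}
    (h : List.Chain' (M.step x) l) :
    List.Chain' (M.step (v ++ x ++ w)) (l.map fun c => (c.1, c.2 + v.length)) := by
  show List.IsChain _ _
  rw [List.isChain_map]
  exact List.IsChain.imp (fun a b hab => step_mid_up v x w hab) h

end Helpers
end H3
section H4
namespace Helpers
variable {Q A : Type}

/-- Split a path whose head is at or inside the middle factor into the middle
excursion and the remainder, recording the reach over the middle word. -/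
lemma split {M : TwoWay Q A} (v u w : List A) :
    ∀ (N : ℕ) (p : List (Q × ℤ)) (q : Q) (s : ℤ) (qf : Q), p.length ≤ N →
      List.Chain' (M.step (v ++ u ++ w)) p → p.head? = some (q, s) →
      p.getLast? = some (qf, (v.length : ℤ) + u.length + w.length + 1) →
      (v.length : ℤ) ≤ s → s ≤ (v.length : ℤ) + u.length + 1 →
      ∃ (p₁ p₂ : List (Q × ℤ)) (q'' : Q) (e : ℤ),
        p = p₁ ++ p₂ ∧
        (∀ c ∈ p₁, (v.length : ℤ) + 1 ≤ c.2 ∧ c.2 ≤ (v.length : ℤ) + u.length) ∧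
        p₂.head? = some (q'', (v.length : ℤ) + e) ∧ (e = 0 ∨ e = (u.length : ℤ) + 1) ∧
        M.reach u (q, s - v.length) (q'', e) := by
  intro N
  induction N with
  | zero =>
    intro p q s qf hN hch hh hl h1 h2
    obtain rfl : p = [] := List.length_eq_zero_iff.mp (by omega)
    simp at hh
  | succ N ih =>
    intro p q s qf hN hch hh hl h1 h2
    by_cases hctx : s ≤ (v.length : ℤ) ∨ (v.length : ℤ) + u.length + 1 ≤ s
    · -- already at an exit position
      refine ⟨[], p, q, s - v.length, by simp, by simp, ?_, by omega, ?_⟩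
      · rw [hh]; congr 2; omega
      · exact Relation.ReflTransGen.refl
    · push_neg at hctx
      obtain ⟨c, t, rfl⟩ : ∃ c t, p = c :: t := by
        cases p with
        | nil => simp at hh
        | cons c t => exact ⟨c, t, rfl⟩
      have hc : c = (q, s) := by simpa using hh
      subst hc
      obtain ⟨c₂, t', rfl⟩ : ∃ c₂ t', t = c₂ :: t' := by
        cases t with
        | nil =>
          simp only [List.getLast?_singleton, Option.some_inj] at hl
          have : s = (v.length : ℤ) + u.length + w.length + 1 := by
            have := congrArg Prod.snd hl; simpa using this
          omega
        | cons c₂ t' => exact ⟨c₂, t', rfl⟩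
      obtain ⟨hstep, hch'⟩ := List.isChain_cons_cons.mp hch
      have hb := step_bounds hstep
      rw [List.getLast?_cons_cons] at hl
      obtain ⟨p₁, p₂, q'', e, heq, hmid, hh₂, he, hre⟩ :=
        ih (c₂ :: t') c₂.1 c₂.2 qf (by simp only [List.length_cons] at hN ⊢; omega)
          hch' (by simp) hl (by omega) (by omega)
      refine ⟨(q, s) :: p₁, p₂, q'', e, by rw [heq]; rfl, ?_, hh₂, he, ?_⟩
      · intro d hd
        rcases List.mem_cons.mp hd with rfl | hd
        · constructor <;> simp <;> omega
        · exact hmid d hd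
      · refine Relation.ReflTransGen.head ?_ hre
        have := step_mid_down v u w hstep (by simp; omega) (by simp; omega)
        simpa using this
  end Helpers
end H4
section H5
namespace Helpers
variable {Q A : Type}

lemma proj_single (v u u' w : List A) (q : Q) (s s' : ℤ)
    (h : (1 ≤ s ∧ s ≤ v.length ∧ s' = s) ∨
      ((v.length : ℤ) + u.length + 1 ≤ s ∧ s ≤ (v.length : ℤ) + u.length + w.length ∧
        s' = s + ((u'.length : ℤ) - u.length))) :
    projPath (ctxI v u w) [(q, s)] = projPath (ctxI v u' w) [(q, s')] := by
  rcases h with ⟨h1, h2, h3⟩ | ⟨h1, h2, h3⟩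
  · subst h3
    rw [projPath_singleton_mem _ _ _ ((mem_ctxI v u w s').mpr (by omega)),
      projPath_singleton_mem _ _ _ ((mem_ctxI v u' w s').mpr (by omega)),
      indexOf_ctxI_left v u w s' h1 h2, indexOf_ctxI_left v u' w s' h1 h2]
  · rw [projPath_singleton_mem _ _ _ ((mem_ctxI v u w s).mpr (by omega)),
      projPath_singleton_mem _ _ _ ((mem_ctxI v u' w s').mpr (by omega)),
      indexOf_ctxI_right v u w s (by omega) (by omega),
      indexOf_ctxI_right v u' w s' (by omega) (by omega)]
    congr 2
    omega

lemma proj_single_out (v x w : List A) (q : Q) (s : ℤ)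
    (h : s ≤ 0 ∨ ((v.length : ℤ) + 1 ≤ s ∧ s ≤ (v.length : ℤ) + x.length) ∨
      (v.length : ℤ) + x.length + w.length + 1 ≤ s) :
    projPath (ctxI v x w) [(q, s)] = ([] : List (Q × ℕ)) := by
  apply projPath_nil_of
  intro c hc
  simp only [List.mem_singleton] at hc
  subst hc
  rw [mem_ctxI]
  omega

set_option maxHeartbeats 1000000 in
lemma main {M : TwoWay Q A} (v u u' w : List A) (heq : M.equiv u u') :
    ∀ (N : ℕ) (p : List (Q × ℤ)) (q : Q) (s s' : ℤ) (qf : Q),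
      List.Chain' (M.step (v ++ u ++ w)) p →
      p.head? = some (q, s) →
      p.getLast? = some (qf, (v.length : ℤ) + u.length + w.length + 1) →
      ((2 * p.length ≤ N ∧
         ((1 ≤ s ∧ s ≤ v.length ∧ s' = s) ∨
          ((v.length : ℤ) + u.length + 1 ≤ s ∧
            s ≤ (v.length : ℤ) + u.length + w.length + 1 ∧
            s' = s + ((u'.length : ℤ) - u.length)))) ∨
       (2 * p.length + 1 ≤ N ∧
         ((s = (v.length : ℤ) + 1 ∧ s' = (v.length : ℤ) + 1) ∨
          (s = (v.length : ℤ) + u.length ∧ s' = (v.length : ℤ) + u'.length)))) →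
      ∃ p₂ : List (Q × ℤ),
        List.Chain' (M.step (v ++ u' ++ w)) p₂ ∧
        p₂.head? = some (q, s') ∧
        p₂.getLast? = some (qf, (v.length : ℤ) + u'.length + w.length + 1) ∧
        projPath (ctxI v u w) p = projPath (ctxI v u' w) p₂ := by
  intro N
  induction N with
  | zero =>
    intro p q s s' qf hch hh hl hflag
    obtain rfl : p = [] := by
      rcases hflag with ⟨hN, _⟩ | ⟨hN, _⟩ <;> exact List.length_eq_zero_iff.mp (by omega)
    simp at hh
  | succ N ih =>
    intro p q s s' qf hch hh hl hflag
    have hlen : (((v ++ u ++ w).length : ℕ) : ℤ)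
        = (v.length : ℤ) + u.length + w.length := by
      simp only [List.length_append]; push_cast; ring
    have hl' : p.getLast? = some (qf, ((v ++ u ++ w).length : ℤ) + 1) := by
      rw [hl]; congr 2; omega
    have hbounds := mem_pos_bounds hch hl'
    rcases hflag with ⟨hN, hC⟩ | ⟨hN, hE⟩
    · -- CONTEXT case
      obtain ⟨c, t, rfl⟩ : ∃ c t, p = c :: t := by
        cases p with
        | nil => simp at hh
        | cons c t => exact ⟨c, t, rfl⟩
      have hc : c = (q, s) := by simpa using hh
      subst hc
      cases t with
      | nil =>
        simp only [List.getLast?_singleton, Option.some_inj] at hl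
        have hq1 : q = qf := congrArg Prod.fst hl
        have hs1 : s = (v.length : ℤ) + u.length + w.length + 1 := by
          have := congrArg Prod.snd hl; simpa using this
        have hs' : s' = (v.length : ℤ) + u'.length + w.length + 1 := by
          rcases hC with ⟨_, h2, _⟩ | ⟨_, _, h3⟩ <;> omega
        refine ⟨[(qf, (v.length : ℤ) + u'.length + w.length + 1)],
          List.isChain_singleton _, by simp [hq1, hs'], rfl, ?_⟩
        rw [proj_single_out v u w q s (by omega),
          proj_single_out v u' w qf ((v.length : ℤ) + u'.length + w.length + 1) (by omega)]
      | cons c₂ t' =>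
        obtain ⟨hstep, hch'⟩ := List.isChain_cons_cons.mp hch
        rw [List.getLast?_cons_cons] at hl
        obtain ⟨h1s, ℓ, hget, hstate, hpos⟩ := hstep
        simp only at h1s hget hstate hpos
        have hslen : s ≤ (v.length : ℤ) + u.length + w.length := by
          have := (List.getElem?_eq_some_iff.mp hget).1
          omega
        have ht₂ : 1 ≤ c₂.2 ∧ c₂.2 ≤ (v.length : ℤ) + u.length + w.length + 1 := by
          have := hbounds c₂ (by simp)
          omega
        have hd : c₂.2 = s - 1 ∨ c₂.2 = s ∨ c₂.2 = s + 1 := by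
          rcases M.move q ℓ with hm | hm | hm <;> omega
        have hs'1 : 1 ≤ s' := by rcases hC with ⟨_, _, rfl⟩ | ⟨_, _, rfl⟩ <;> omega
        -- letter transfer
        have hget' : (v ++ u' ++ w)[(s' - 1).toNat]? = some ℓ := by
          rcases hC with ⟨ha1, ha2, h3⟩ | ⟨ha1, ha2, h3⟩
          · subst h3
            rw [get_left v u' w s' h1s ha2, ← get_left v u w s' h1s ha2]; exact hget
          · rw [h3, get_right v u' w _ (by omega) (by omega)]
            rw [get_right v u w s (by omega) (by omega)] at hget
            rw [← hget]; congr 2; omega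
        -- now classify the step target
        have key : ∃ τ', τ' = s' + (M.δ q ℓ).2 ∧
            ∃ p₂' : List (Q × ℤ),
              List.Chain' (M.step (v ++ u' ++ w)) p₂' ∧
              p₂'.head? = some (c₂.1, τ') ∧
              p₂'.getLast? = some (qf, (v.length : ℤ) + u'.length + w.length + 1) ∧
              projPath (ctxI v u w) (c₂ :: t') = projPath (ctxI v u' w) p₂' := by
          rcases hC with ⟨ha1, ha2, h3⟩ | ⟨ha1, ha2, h3⟩
          · by_cases hcase : c₂.2 ≤ (v.length : ℤ)
            · -- stay left
              obtain ⟨p₂', h₁, h₂, h₃, h₄⟩ := ih (c₂ :: t') c₂.1 c₂.2 c₂.2 qf hch'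
                (by simp) hl (Or.inl ⟨by simp only [List.length_cons] at hN ⊢; omega, Or.inl ⟨by omega, by omega, rfl⟩⟩)
              exact ⟨c₂.2, by omega, p₂', h₁, h₂, h₃, h₄⟩
            · -- cross into the middle from the left: c₂.2 = v.length + 1
              have hc₂ : c₂.2 = (v.length : ℤ) + 1 := by omega
              obtain ⟨p₂', h₁, h₂, h₃, h₄⟩ := ih (c₂ :: t') c₂.1 c₂.2 ((v.length : ℤ) + 1) qf
                hch' (by simp) hl
                (Or.inr ⟨by simp only [List.length_cons] at hN ⊢; omega, Or.inl ⟨hc₂, rfl⟩⟩)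
              exact ⟨(v.length : ℤ) + 1, by omega, p₂', h₁, h₂, h₃, h₄⟩
          · by_cases hcase : (v.length : ℤ) + u.length + 1 ≤ c₂.2
            · -- stay right
              obtain ⟨p₂', h₁, h₂, h₃, h₄⟩ := ih (c₂ :: t') c₂.1 c₂.2
                (c₂.2 + ((u'.length : ℤ) - u.length)) qf hch'
                (by simp) hl (Or.inl ⟨by simp only [List.length_cons] at hN ⊢; omega, Or.inr ⟨by omega, by omega, rfl⟩⟩)
              exact ⟨c₂.2 + ((u'.length : ℤ) - u.length), by omega, p₂', h₁, h₂, h₃, h₄⟩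
            · -- cross into the middle from the right: c₂.2 = v.length + u.length
              have hc₂ : c₂.2 = (v.length : ℤ) + u.length := by omega
              obtain ⟨p₂', h₁, h₂, h₃, h₄⟩ := ih (c₂ :: t') c₂.1 c₂.2 ((v.length : ℤ) + u'.length)
                qf hch' (by simp) hl
                (Or.inr ⟨by simp only [List.length_cons] at hN ⊢; omega, Or.inr ⟨hc₂, rfl⟩⟩)
              exact ⟨(v.length : ℤ) + u'.length, by omega, p₂', h₁, h₂, h₃, h₄⟩
        obtain ⟨τ', hτ', p₂', hch₂, hh₂, hl₂, hproj₂⟩ := key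
        refine ⟨(q, s') :: p₂', ?_, rfl, ?_, ?_⟩
        · refine List.isChain_cons.mpr ⟨?_, hch₂⟩
          intro y hy
          rw [hh₂] at hy
          have hy' : (c₂.1, τ') = y := by simpa using hy
          subst hy'
          exact ⟨hs'1, ℓ, hget', hstate, hτ'⟩
        · obtain ⟨z, zs, rfl⟩ : ∃ z zs, p₂' = z :: zs := by
            cases p₂' with
            | nil => simp at hh₂
            | cons z zs => exact ⟨z, zs, rfl⟩
          rw [List.getLast?_cons_cons]
          exact hl₂
        · have hsingle : projPath (ctxI v u w) [(q, s)] = projPath (ctxI v u' w) [(q, s')] := by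
            apply proj_single
            rcases hC with ⟨ha1, ha2, h3⟩ | ⟨ha1, ha2, h3⟩
            · exact Or.inl ⟨ha1, ha2, h3⟩
            · exact Or.inr ⟨ha1, by omega, h3⟩
          calc projPath (ctxI v u w) ((q, s) :: c₂ :: t')
              = projPath (ctxI v u w) [(q, s)] ++ projPath (ctxI v u w) (c₂ :: t') :=
                projPath_cons _ _ _
            _ = projPath (ctxI v u' w) [(q, s')] ++ projPath (ctxI v u' w) p₂' := by
                rw [hsingle, hproj₂]
            _ = projPath (ctxI v u' w) ((q, s') :: p₂') := (projPath_cons _ _ _).symm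
    · -- ENTRY case
      obtain ⟨p₁, p₂, q'', e, heqp, hmid, hh₂, he, hre⟩ :=
        split v u w p.length p q s qf le_rfl hch hh hl
          (by rcases hE with ⟨rfl, _⟩ | ⟨rfl, _⟩ <;> omega)
          (by rcases hE with ⟨rfl, _⟩ | ⟨rfl, _⟩ <;> omega)
      -- transfer the behavior to u'
      have key : ∃ st' e', s' = st' + v.length ∧
          ((e = 0 ∧ e' = 0) ∨ (e = (u.length : ℤ) + 1 ∧ e' = (u'.length : ℤ) + 1)) ∧
          M.reach u' (q, st') (q'', e') := by
        rcases hE with ⟨hs, hs'⟩ | ⟨hs, hs'⟩ <;> rcases he with rfl | rfl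
        · have hre1 : M.reach u (q, 1) (q'', 0) := by
            have e1 : s - (v.length : ℤ) = 1 := by omega
            rwa [e1] at hre
          have hmem : (q, q'') ∈ M.bhLL u := hre1
          rw [heq.1] at hmem
          exact ⟨1, 0, by omega, Or.inl ⟨rfl, rfl⟩, hmem⟩
        · have hre1 : M.reach u (q, 1) (q'', (u.length : ℤ) + 1) := by
            have e1 : s - (v.length : ℤ) = 1 := by omega
            rwa [e1] at hre
          have hmem : (q, q'') ∈ M.bhLR u := hre1
          rw [heq.2.1] at hmem
          exact ⟨1, (u'.length : ℤ) + 1, by omega, Or.inr ⟨rfl, rfl⟩, hmem⟩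
        · have hre1 : M.reach u (q, (u.length : ℤ)) (q'', 0) := by
            have e1 : s - (v.length : ℤ) = (u.length : ℤ) := by omega
            rwa [e1] at hre
          have hmem : (q, q'') ∈ M.bhRL u := hre1
          rw [heq.2.2.1] at hmem
          exact ⟨(u'.length : ℤ), 0, by omega, Or.inl ⟨rfl, rfl⟩, hmem⟩
        · have hre1 : M.reach u (q, (u.length : ℤ)) (q'', (u.length : ℤ) + 1) := by
            have e1 : s - (v.length : ℤ) = (u.length : ℤ) := by omega
            rwa [e1] at hre
          have hmem : (q, q'') ∈ M.bhRR u := hre1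
          rw [heq.2.2.2] at hmem
          exact ⟨(u'.length : ℤ), (u'.length : ℤ) + 1, by omega, Or.inr ⟨rfl, rfl⟩, hmem⟩
      obtain ⟨st', e', hst', hee', hre'⟩ := key
      obtain ⟨r, hrch, hrh, hrl⟩ := reach_chain hre'
      have hrne : r ≠ [] := by rintro rfl; simp at hrh
      -- shifted middle run over u'
      set sh : Q × ℤ → Q × ℤ := fun c => (c.1, c.2 + v.length) with hsh
      have hrch_s : List.Chain' (M.step (v ++ u' ++ w)) (r.map sh) :=
        chain_mid_up v u' w hrch
      have hrh_s : (r.map sh).head? = some (q, s') := by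
        rw [List.head?_map, hrh]; simp [hsh]; omega
      have hrl_s : (r.map sh).getLast? = some (q'', (v.length : ℤ) + e') := by
        rw [List.getLast?_map, hrl]; simp [hsh]; omega
      -- the remainder p₂
      have hp₂ne : p₂ ≠ [] := by rintro rfl; simp at hh₂
      have hch₂ : List.Chain' (M.step (v ++ u ++ w)) p₂ :=
        hch.suffix ⟨p₁, heqp.symm⟩
      have hl₂ : p₂.getLast? = some (qf, (v.length : ℤ) + u.length + w.length + 1) := by
        rw [heqp, List.getLast?_append_of_ne_nil _ hp₂ne] at hl
        exact hl
      have hmem₂ : (q'', (v.length : ℤ) + e) ∈ p := by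
        rw [heqp]
        exact List.mem_append_right _ (List.mem_of_mem_head? (Option.mem_def.mpr hh₂))
      have h1a : e = 0 → 1 ≤ (v.length : ℤ) := by
        intro h0
        rcases mem_last_or_step hch hl' _ hmem₂ with hle | ⟨c', hs⟩
        · have := congrArg Prod.snd hle
          simp only at this
          omega
        · have := (step_bounds hs).1
          simp only at this
          omega
      have hplen : p₂.length ≤ p.length := by
        rw [heqp, List.length_append]; omega
      obtain ⟨p₂', hch₂', hh₂', hl₂', hproj₂⟩ := ih p₂ q'' ((v.length : ℤ) + e)
        ((v.length : ℤ) + e') qf hch₂ hh₂ hl₂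
        (Or.inl ⟨by omega, by
          rcases hee' with ⟨rfl, rfl⟩ | ⟨rfl, rfl⟩
          · exact Or.inl ⟨by have := h1a rfl; omega, by omega, by omega⟩
          · exact Or.inr ⟨by omega, by omega, by omega⟩⟩)
      obtain ⟨gch, ghh, ghl⟩ := glue hrch_s hch₂' hrl_s hh₂'
      refine ⟨r.map sh ++ p₂'.tail, gch, by rw [ghh]; exact hrh_s, by rw [ghl]; exact hl₂', ?_⟩
      -- projections
      have hgl : r.getLast hrne = (q'', e') := by
        have := List.getLast?_eq_getLast hrne
        rw [hrl] at this
        exact (Option.some_inj.mp this).symm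
      obtain ⟨z, zs, hzzs⟩ : ∃ z zs, p₂' = z :: zs := by
        cases p₂' with
        | nil => simp at hh₂'
        | cons z zs => exact ⟨z, zs, rfl⟩
      have hz : z = (q'', (v.length : ℤ) + e') := by
        rw [hzzs] at hh₂'; simpa using hh₂'
      have hdecomp : r.map sh = (r.dropLast.map sh) ++ [(q'', e' + v.length)] := by
        conv_lhs => rw [← List.dropLast_append_getLast hrne, hgl]
        rw [List.map_append]
        rfl
      rw [heqp, projPath_append, projPath_append, hdecomp, projPath_append]
      have hp₁ : projPath (ctxI v u w) p₁ = [] := by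
        apply projPath_nil_of
        intro c hc
        rw [mem_ctxI]
        have := hmid c hc
        omega
      have hpd : projPath (ctxI v u' w) (r.dropLast.map sh) = [] := by
        apply projPath_nil_of
        intro c hc
        obtain ⟨d, hd, rfl⟩ := List.mem_map.mp hc
        obtain ⟨d₂, hsd⟩ := chain'_mem_dropLast hrch hd
        have hb := step_bounds hsd
        rw [mem_ctxI]
        simp only [hsh]
        omega
      rw [hp₁, hpd, hproj₂, hzzs, projPath_cons, hz]
      have : ((q'', e' + (v.length : ℤ)) : Q × ℤ) = (q'', (v.length : ℤ) + e') := by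
        rw [add_comm]
      rw [this]
      simp
end Helpers
end H5
section H6
namespace Helpers
variable {Q A : Type}

/-- Determinism: a chain run ending at the right exit is unique given its head. -/
lemma uniq {M : TwoWay Q A} (x : List A) :
    ∀ (p r : List (Q × ℤ)), List.Chain' (M.step x) p → List.Chain' (M.step x) r →
      p.head? = r.head? →
      (∃ qf : Q, p.getLast? = some (qf, (x.length : ℤ) + 1)) →
      (∃ qf' : Q, r.getLast? = some (qf', (x.length : ℤ) + 1)) → p = r
  | [], r, _, _, hh, _, _ => by
    cases r with
    | nil => rfl
    | cons c t => simp at hh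
  | c :: t, [], _, _, hh, _, _ => by simp at hh
  | c :: t, c' :: t', hchp, hchr, hh, hlp, hlr => by
    have hcc : c = c' := by simpa using hh
    subst hcc
    have hnostep : ∀ d : Q × ℤ, c.2 = (x.length : ℤ) + 1 → ¬ M.step x c d := by
      intro d hc2 ⟨h1, aa, ha, _⟩
      have := (List.getElem?_eq_some_iff.mp ha).1
      omega
    cases t with
    | nil =>
      cases t' with
      | nil => rfl
      | cons d s' =>
        obtain ⟨qf, hqf⟩ := hlp
        have hc2 : c.2 = (x.length : ℤ) + 1 := by
          simp only [List.getLast?_singleton, Option.some_inj] at hqf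
          rw [hqf]
        exact absurd (List.isChain_cons_cons.mp hchr).1 (hnostep d hc2)
    | cons d t₂ =>
      cases t' with
      | nil =>
        obtain ⟨qf', hqf'⟩ := hlr
        have hc2 : c.2 = (x.length : ℤ) + 1 := by
          simp only [List.getLast?_singleton, Option.some_inj] at hqf'
          rw [hqf']
        exact absurd (List.isChain_cons_cons.mp hchp).1 (hnostep d hc2)
      | cons d' t₂' =>
        obtain ⟨hs1, hchp'⟩ := List.isChain_cons_cons.mp hchp
        obtain ⟨hs2, hchr'⟩ := List.isChain_cons_cons.mp hchr
        have hdd : d = d' := by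
          obtain ⟨h1, aa, ha, hq1, hp1⟩ := hs1
          obtain ⟨h1', aa', ha', hq2, hp2⟩ := hs2
          have haa : aa = aa' := by rw [ha] at ha'; exact Option.some_inj.mp ha'
          subst haa
          exact Prod.ext (by rw [hq1, hq2]) (by rw [hp1, hp2])
        subst hdd
        have := uniq x (d :: t₂) (d :: t₂') hchp' hchr' rfl
          (by rw [← List.getLast?_cons_cons (a := c)]; exact hlp)
          (by rw [← List.getLast?_cons_cons (a := c)]; exact hlr)
        rw [this]
end Helpers
end H6

/-- If `u ∼_A u'` then for every context `(v, w)` the context paths coincide. -/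
theorem stmt_16 {Q A : Type} (M : TwoWayAcc Q A) (u u' : List A)
    (h : M.toTwoWay.equiv u u') :
    ∀ (v w : List A) (p p' : List (Q × ℤ)),
      M.IsAccPath (v ++ u ++ w) p → M.IsAccPath (v ++ u' ++ w) p' →
      projPath (ctxI v u w) p = projPath (ctxI v u' w) p' := by
  intro v w p p' hp hp'
  obtain ⟨hh, hch, qf, hl, hf⟩ := hp
  obtain ⟨hh', hch', qf', hl', hf'⟩ := hp'
  have hlen : (((v ++ u ++ w).length : ℕ) : ℤ) = (v.length : ℤ) + u.length + w.length := by
    simp only [List.length_append]; push_cast; ring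
  have hlen' : (((v ++ u' ++ w).length : ℕ) : ℤ) = (v.length : ℤ) + u'.length + w.length := by
    simp only [List.length_append]; push_cast; ring
  have hl2 : p.getLast? = some (qf, (v.length : ℤ) + u.length + w.length + 1) := by
    rw [hl]; congr 2; omega
  have hflag : (2 * p.length ≤ 2 * p.length + 1 ∧
      ((1 ≤ (1 : ℤ) ∧ (1 : ℤ) ≤ v.length ∧ (1 : ℤ) = 1) ∨
       ((v.length : ℤ) + u.length + 1 ≤ 1 ∧
         (1 : ℤ) ≤ (v.length : ℤ) + u.length + w.length + 1 ∧
         (1 : ℤ) = 1 + ((u'.length : ℤ) - u.length)))) ∨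
      (2 * p.length + 1 ≤ 2 * p.length + 1 ∧
      (((1 : ℤ) = (v.length : ℤ) + 1 ∧ (1 : ℤ) = (v.length : ℤ) + 1) ∨
       ((1 : ℤ) = (v.length : ℤ) + u.length ∧ (1 : ℤ) = (v.length : ℤ) + u'.length))) := by
    by_cases ha : 1 ≤ (v.length : ℤ)
    · exact Or.inl ⟨by omega, Or.inl ⟨le_refl 1, ha, rfl⟩⟩
    · exact Or.inr ⟨le_refl _, Or.inl ⟨by omega, by omega⟩⟩
  obtain ⟨p₂, hch₂, hh₂, hl₂, hproj⟩ :=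
    Helpers.main v u u' w h (2 * p.length + 1) p M.q0 1 1 qf hch hh hl2 hflag
  have hp'eq : p' = p₂ := by
    apply Helpers.uniq (v ++ u' ++ w) p' p₂ hch' hch₂
    · rw [hh', hh₂]
    · exact ⟨qf', hl'⟩
    · refine ⟨qf, ?_⟩
      rw [hl₂]; congr 2; omega
  rw [hp'eq]
  exact hproj
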